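/- Let V and W be complex vector spaces, let u ∈ V and v ∈ W be nonzero vectors, and let A : V →ₗ[ℂ] V and B : W →ₗ[ℂ] W be linear maps such that (TensorProduct.map A B)(u ⊗ₜ v) = u ⊗ₜ v. Then there exists a nonzero scalar λ ∈ ℂ with A u = λ • u and B v = λ⁻¹ • v. -/
import Mathlib

open scoped TensorProduct

/-- a nonzero product vector fixed by `A ⊗ B` is an eigenvector of each factor,
with eigenvalues `λ` and `λ⁻¹`. -/
theorem product_vector_fixed_by_tensor_map {V W : Type*}
    [AddCommGroup V] [Module ℂ V] [AddCommGroup W] [Module ℂ W]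
    (u : V) (v : W) (hu : u ≠ 0) (hv : v ≠ 0)
    (A : V →ₗ[ℂ] V) (B : W →ₗ[ℂ] W)
    (h : TensorProduct.map A B (u ⊗ₜ[ℂ] v) = u ⊗ₜ[ℂ] v) :
    ∃ l : ℂ, l ≠ 0 ∧ A u = l • u ∧ B v = l⁻¹ • v := by
  obtain ⟨φ₀, hφ₀⟩ : ∃ φ : Module.Dual ℂ V, φ u ≠ 0 := by
    by_contra hc; push_neg at hc
    exact hu ((Module.forall_dual_apply_eq_zero_iff ℂ u).mp hc)
  obtain ⟨ψ₀, hψ₀⟩ : ∃ ψ : Module.Dual ℂ W, ψ v ≠ 0 := by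
    by_contra hc; push_neg at hc
    exact hv ((Module.forall_dual_apply_eq_zero_iff ℂ v).mp hc)
  set φ : Module.Dual ℂ V := (φ₀ u)⁻¹ • φ₀ with hφdef
  set ψ : Module.Dual ℂ W := (ψ₀ v)⁻¹ • ψ₀ with hψdef
  have hφ : φ u = 1 := by simp [hφdef, inv_mul_cancel₀ hφ₀]
  have hψ : ψ v = 1 := by simp [hψdef, inv_mul_cancel₀ hψ₀]
  -- contraction maps
  let f : V ⊗[ℂ] W →ₗ[ℂ] W := TensorProduct.lift ((LinearMap.lsmul ℂ W).comp φ)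
  let g : V ⊗[ℂ] W →ₗ[ℂ] V :=
    TensorProduct.lift (LinearMap.flip ((LinearMap.lsmul ℂ V).comp ψ))
  have hf : φ (A u) • B v = v := by
    have := congrArg f h
    simpa [f, hφ] using this
  have hg : ψ (B v) • A u = u := by
    have := congrArg g h
    simpa [g, hψ] using this
  set a := φ (A u)
  set b := ψ (B v)
  have hab : a * b = 1 := by
    have := congrArg ψ hf
    simpa [map_smul, hψ, b, smul_eq_mul] using this
  have ha : a ≠ 0 := left_ne_zero_of_mul_eq_one hab
  have hb : b ≠ 0 := right_ne_zero_of_mul_eq_one hab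
  have hbinv : b⁻¹ = a := inv_eq_of_mul_eq_one_left hab
  have hainv : a⁻¹ = b := inv_eq_of_mul_eq_one_right hab
  refine ⟨a, ha, ?_, ?_⟩
  · rw [← hbinv]
    exact ((inv_smul_eq_iff₀ hb).mpr hg.symm).symm
  · exact ((inv_smul_eq_iff₀ ha).mpr hf.symm).symm
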